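/- Let ξ₁, ξ₂, ξ₃ be vectors in ℝ² such that the origin lies in the interior of the triangle Π[ξ₁,ξ₂,ξ₃] = conv{ξ₁,ξ₂,ξ₃}, and let f(ξ₁), f(ξ₂), f(ξ₃) be arbitrary real numbers. Then the quantity min_{γ∈ℝ²} max_{i∈{1,2,3}} [f(ξᵢ) − ⟨ξᵢ,γ⟩] equals (f(ξ₁)D(ξ₂,ξ₃) + f(ξ₂)D(ξ₃,ξ₁) + f(ξ₃)D(ξ₁,ξ₂)) / (D(ξ₂,ξ₃)+D(ξ₃,ξ₁)+D(ξ₁,ξ₂)), and the minimum is attained at the unique point γ₀ = (f(ξ₁)R(ξ₂−ξ₃) + f(ξ₂)R(ξ₃−ξ₁) + f(ξ₃)R(ξ₁−ξ₂)) / (D(ξ₂,ξ₃)+D(ξ₃,ξ₁)+D(ξ₁,ξ₂)). -/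

import Mathlib

noncomputable section

/-- Standard inner product on ℝ². -/
def dotp2 (u v : Fin 2 → ℝ) : ℝ := u 0 * v 0 + u 1 * v 1

/-- Oriented area of the parallelogram built on `u, v`. -/
def D2 (u v : Fin 2 → ℝ) : ℝ := u 0 * v 1 - u 1 * v 0

/-- Rotation `R(u) = (u², -u¹)`. -/
def R2 (u : Fin 2 → ℝ) : Fin 2 → ℝ := ![u 1, -u 0]

lemma mem_tri {ξ₁ ξ₂ ξ₃ x : Fin 2 → ℝ}
    (h : x ∈ convexHull ℝ ({ξ₁, ξ₂, ξ₃} : Set (Fin 2 → ℝ))) :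
    ∃ a b c : ℝ, 0 ≤ a ∧ 0 ≤ b ∧ 0 ≤ c ∧ a + b + c = 1 ∧ a • ξ₁ + b • ξ₂ + c • ξ₃ = x := by
  have hsub : convexHull ℝ ({ξ₁, ξ₂, ξ₃} : Set (Fin 2 → ℝ)) ⊆
      {y | ∃ a b c : ℝ, 0 ≤ a ∧ 0 ≤ b ∧ 0 ≤ c ∧ a + b + c = 1 ∧ a • ξ₁ + b • ξ₂ + c • ξ₃ = y} := by
    apply convexHull_min
    · rintro y hy
      rcases hy with rfl | rfl | rfl
      · exact ⟨1, 0, 0, by norm_num, by norm_num, by norm_num, by ring, by module⟩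
      · exact ⟨0, 1, 0, by norm_num, by norm_num, by norm_num, by ring, by module⟩
      · exact ⟨0, 0, 1, by norm_num, by norm_num, by norm_num, by ring, by module⟩
    · rintro y ⟨a, b, c, ha, hb, hc, habc, rfl⟩ z ⟨a', b', c', ha', hb', hc', habc', rfl⟩
        p q hp hq hpq
      refine ⟨p*a + q*a', p*b + q*b', p*c + q*c', by positivity, by positivity, by positivity,
        by linear_combination p*habc + q*habc' + hpq, by module⟩
  exact hsub h

lemma interA {ξ₁ ξ₂ ξ₃ n : Fin 2 → ℝ}
    (hin : (0 : Fin 2 → ℝ) ∈ interior (convexHull ℝ ({ξ₁, ξ₂, ξ₃} : Set (Fin 2 → ℝ))))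
    (hn : n ≠ 0) (h1 : dotp2 ξ₁ n ≤ 0) (h2 : dotp2 ξ₂ n ≤ 0) (h3 : dotp2 ξ₃ n ≤ 0) : False := by
  have hg : Continuous (fun t : ℝ => t • n) := continuous_id.smul continuous_const
  have hmem : (fun t : ℝ => t • n) ⁻¹' interior (convexHull ℝ ({ξ₁, ξ₂, ξ₃} : Set (Fin 2 → ℝ)))
      ∈ nhds (0 : ℝ) := by
    apply (isOpen_interior.preimage hg).mem_nhds
    simpa using hin
  obtain ⟨δ, hδ, hball⟩ := Metric.mem_nhds_iff.mp hmem
  have ht : (δ/2 : ℝ) ∈ Metric.ball (0:ℝ) δ := by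
    rw [Metric.mem_ball, Real.dist_eq, sub_zero, abs_of_pos (by linarith)]
    linarith
  have hx : (δ/2 : ℝ) • n ∈ convexHull ℝ ({ξ₁, ξ₂, ξ₃} : Set (Fin 2 → ℝ)) :=
    interior_subset (hball ht)
  obtain ⟨a, b, c, ha, hb, hc, habc, hvec⟩ := mem_tri hx
  have e0 := congrFun hvec 0
  have e1 := congrFun hvec 1
  simp only [Pi.add_apply, Pi.smul_apply, smul_eq_mul] at e0 e1
  have hcomb : (δ/2) * (n 0 ^ 2 + n 1 ^ 2) =
      a * dotp2 ξ₁ n + b * dotp2 ξ₂ n + c * dotp2 ξ₃ n := by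
    simp only [dotp2]
    linear_combination (-(n 0)) * e0 - n 1 * e1
  have hnn : 0 < n 0 ^ 2 + n 1 ^ 2 := by
    rcases Function.ne_iff.mp hn with ⟨i, hi⟩
    fin_cases i <;> simp at hi <;> positivity
  nlinarith [mul_nonpos_of_nonneg_of_nonpos ha h1, mul_nonpos_of_nonneg_of_nonpos hb h2,
    mul_nonpos_of_nonneg_of_nonpos hc h3, mul_pos (by linarith : (0:ℝ) < δ/2) hnn]

lemma dotp2_R2 (u v : Fin 2 → ℝ) : dotp2 u (R2 v) = D2 u v := by
  simp [dotp2, R2, D2]; ring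

lemma R2_ne_zero {u : Fin 2 → ℝ} (hu : u ≠ 0) : R2 u ≠ 0 := by
  intro h
  apply hu
  funext i
  have h0 := congrFun h 0
  have h1 := congrFun h 1
  simp [R2] at h0 h1
  fin_cases i <;> simp [h0, h1]

lemma D2_self (u : Fin 2 → ℝ) : D2 u u = 0 := by simp only [D2]; ring

lemma D2_swap (u v : Fin 2 → ℝ) : D2 u v = -D2 v u := by simp only [D2]; ring

lemma dotp2_smul_R2 (t : ℝ) (u v : Fin 2 → ℝ) : dotp2 u (t • R2 v) = t * D2 u v := by
  simp only [dotp2, R2, D2, Pi.smul_apply, smul_eq_mul, Matrix.cons_val_zero,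
    Matrix.cons_val_one, Matrix.head_cons]
  ring

lemma D2_sub_right (u v w : Fin 2 → ℝ) : D2 u (v - w) = D2 u v - D2 u w := by
  simp only [D2, Pi.sub_apply]; ring

lemma pos1 (ξ₁ ξ₂ ξ₃ : Fin 2 → ℝ)
    (hin : (0 : Fin 2 → ℝ) ∈ interior (convexHull ℝ ({ξ₁, ξ₂, ξ₃} : Set (Fin 2 → ℝ)))) :
    0 < D2 ξ₂ ξ₃ * (D2 ξ₂ ξ₃ + D2 ξ₃ ξ₁ + D2 ξ₁ ξ₂) := by
  obtain ⟨a, b, c, ha, hb, hc, habc, hvec⟩ := mem_tri (interior_subset hin)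
  have e0 := congrFun hvec 0
  have e1 := congrFun hvec 1
  simp only [Pi.add_apply, Pi.smul_apply, smul_eq_mul, Pi.zero_apply] at e0 e1
  set S : ℝ := D2 ξ₂ ξ₃ + D2 ξ₃ ξ₁ + D2 ξ₁ ξ₂ with hSdef
  have hd1 : D2 ξ₂ ξ₃ = a * S := by
    simp only [hSdef, D2]
    linear_combination (ξ₃ 1 - ξ₂ 1) * e0 + (ξ₂ 0 - ξ₃ 0) * e1 -
      (ξ₂ 0 * ξ₃ 1 - ξ₂ 1 * ξ₃ 0) * habc
  have hd2 : D2 ξ₃ ξ₁ = b * S := by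
    simp only [hSdef, D2]
    linear_combination (ξ₁ 1 - ξ₃ 1) * e0 + (ξ₃ 0 - ξ₁ 0) * e1 -
      (ξ₃ 0 * ξ₁ 1 - ξ₃ 1 * ξ₁ 0) * habc
  have hd3 : D2 ξ₁ ξ₂ = c * S := by
    simp only [hSdef, D2]
    linear_combination (ξ₂ 1 - ξ₁ 1) * e0 + (ξ₁ 0 - ξ₂ 0) * e1 -
      (ξ₁ 0 * ξ₂ 1 - ξ₁ 1 * ξ₂ 0) * habc
  by_contra hle
  push_neg at hle
  rcases eq_or_ne S 0 with hS | hS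
  · -- degenerate: all D2 vanish
    rw [hS, mul_zero] at hd1 hd2 hd3
    by_cases h1 : ξ₁ = 0
    · by_cases h2 : ξ₂ = 0
      · by_cases h3 : ξ₃ = 0
        · refine interA hin (n := ![1, 0]) ?_ ?_ ?_ ?_
          · intro h; have := congrFun h 0; simp at this
          · simp [h1, dotp2]
          · simp [h2, dotp2]
          · simp [h3, dotp2]
        · refine interA hin (n := R2 ξ₃) (R2_ne_zero h3) ?_ ?_ ?_ <;> rw [dotp2_R2]
          · rw [D2_swap, hd2]; norm_num
          · rw [hd1]
          · rw [D2_self]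
      · refine interA hin (n := R2 ξ₂) (R2_ne_zero h2) ?_ ?_ ?_ <;> rw [dotp2_R2]
        · rw [hd3]
        · rw [D2_self]
        · rw [D2_swap, hd1]; norm_num
    · refine interA hin (n := R2 ξ₁) (R2_ne_zero h1) ?_ ?_ ?_ <;> rw [dotp2_R2]
      · rw [D2_self]
      · rw [D2_swap, hd3]; norm_num
      · rw [hd2]
  · -- S ≠ 0 but D2 ξ₂ ξ₃ * S ≤ 0
    have hSS : 0 < S * S := mul_self_pos.mpr hS
    have hle' : a * (S * S) ≤ 0 := by
      calc a * (S * S) = (a * S) * S := by ring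
        _ = D2 ξ₂ ξ₃ * S := by rw [hd1]
        _ ≤ 0 := hle
    have ha0 : a = 0 := by
      by_contra h
      have ha' : 0 < a := lt_of_le_of_ne ha (Ne.symm h)
      exact absurd hle' (not_le.mpr (mul_pos ha' hSS))
    have hd10 : D2 ξ₂ ξ₃ = 0 := by rw [hd1, ha0, zero_mul]
    have hne : ξ₃ - ξ₂ ≠ 0 := by
      intro h
      apply hS
      have h' : ξ₃ = ξ₂ := by rwa [sub_eq_zero] at h
      simp only [hSdef, h', D2]
      ring
    refine interA hin (n := S • R2 (ξ₃ - ξ₂)) (smul_ne_zero hS (R2_ne_zero hne)) ?_ ?_ ?_ <;>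
      rw [dotp2_smul_R2, D2_sub_right]
    · have key : D2 ξ₁ ξ₃ - D2 ξ₁ ξ₂ = -S := by
        simp only [hSdef, D2] at hd10 ⊢
        linear_combination hd10
      rw [key]
      nlinarith [hSS]
    · rw [hd10, D2_self]; norm_num
    · rw [D2_self, D2_swap ξ₃ ξ₂, hd10]; norm_num

set_option maxHeartbeats 1000000 in
theorem stmt0 (ξ₁ ξ₂ ξ₃ : Fin 2 → ℝ)
    (hin : (0 : Fin 2 → ℝ) ∈ interior (convexHull ℝ ({ξ₁, ξ₂, ξ₃} : Set (Fin 2 → ℝ))))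
    (f₁ f₂ f₃ : ℝ) :
    let Dsum : ℝ := D2 ξ₂ ξ₃ + D2 ξ₃ ξ₁ + D2 ξ₁ ξ₂
    let V : ℝ := (f₁ * D2 ξ₂ ξ₃ + f₂ * D2 ξ₃ ξ₁ + f₃ * D2 ξ₁ ξ₂) / Dsum
    let γ₀ : Fin 2 → ℝ := Dsum⁻¹ • (f₁ • R2 (ξ₂ - ξ₃) + f₂ • R2 (ξ₃ - ξ₁) + f₃ • R2 (ξ₁ - ξ₂))
    let F : (Fin 2 → ℝ) → ℝ :=
      fun γ => max (max (f₁ - dotp2 ξ₁ γ) (f₂ - dotp2 ξ₂ γ)) (f₃ - dotp2 ξ₃ γ)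
    IsLeast (Set.range F) V ∧ F γ₀ = V ∧ ∀ γ, F γ = V → γ = γ₀ := by
  intro Dsum V γ₀ F
  have hset2 : ({ξ₂, ξ₃, ξ₁} : Set (Fin 2 → ℝ)) = {ξ₁, ξ₂, ξ₃} := by
    ext x; simp only [Set.mem_insert_iff, Set.mem_singleton_iff]; tauto
  have hset3 : ({ξ₃, ξ₁, ξ₂} : Set (Fin 2 → ℝ)) = {ξ₁, ξ₂, ξ₃} := by
    ext x; simp only [Set.mem_insert_iff, Set.mem_singleton_iff]; tauto
  have hp1 : 0 < D2 ξ₂ ξ₃ * (D2 ξ₂ ξ₃ + D2 ξ₃ ξ₁ + D2 ξ₁ ξ₂) := pos1 ξ₁ ξ₂ ξ₃ hin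
  have hp2 : 0 < D2 ξ₃ ξ₁ * (D2 ξ₂ ξ₃ + D2 ξ₃ ξ₁ + D2 ξ₁ ξ₂) := by
    have h := pos1 ξ₂ ξ₃ ξ₁ (by rw [hset2]; exact hin)
    nlinarith [h]
  have hp3 : 0 < D2 ξ₁ ξ₂ * (D2 ξ₂ ξ₃ + D2 ξ₃ ξ₁ + D2 ξ₁ ξ₂) := by
    have h := pos1 ξ₃ ξ₁ ξ₂ (by rw [hset3]; exact hin)
    nlinarith [h]
  have hS : (D2 ξ₂ ξ₃ + D2 ξ₃ ξ₁ + D2 ξ₁ ξ₂) ≠ 0 := by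
    intro h; rw [h, mul_zero] at hp1; exact lt_irrefl 0 hp1
  have hVeq : (D2 ξ₂ ξ₃ + D2 ξ₃ ξ₁ + D2 ξ₁ ξ₂) * V =
      f₁ * D2 ξ₂ ξ₃ + f₂ * D2 ξ₃ ξ₁ + f₃ * D2 ξ₁ ξ₂ := by
    simp only [V, Dsum]
    field_simp
  have hC0 : D2 ξ₂ ξ₃ * ξ₁ 0 + D2 ξ₃ ξ₁ * ξ₂ 0 + D2 ξ₁ ξ₂ * ξ₃ 0 = 0 := by
    simp only [D2]; ring
  have hC1 : D2 ξ₂ ξ₃ * ξ₁ 1 + D2 ξ₃ ξ₁ * ξ₂ 1 + D2 ξ₁ ξ₂ * ξ₃ 1 = 0 := by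
    simp only [D2]; ring
  have hid : ∀ γ : Fin 2 → ℝ,
      D2 ξ₂ ξ₃ * (f₁ - dotp2 ξ₁ γ) + D2 ξ₃ ξ₁ * (f₂ - dotp2 ξ₂ γ) +
        D2 ξ₁ ξ₂ * (f₃ - dotp2 ξ₃ γ) = (D2 ξ₂ ξ₃ + D2 ξ₃ ξ₁ + D2 ξ₁ ξ₂) * V := by
    intro γ
    rw [hVeq]
    simp only [dotp2]
    linear_combination (-(γ 0)) * hC0 - γ 1 * hC1
  -- value at γ₀
  have ha1 : dotp2 ξ₁ γ₀ = f₁ - V := by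
    simp only [γ₀, V, Dsum, dotp2, R2, D2, Pi.smul_apply, Pi.add_apply, Pi.sub_apply,
      smul_eq_mul, Matrix.cons_val_zero, Matrix.cons_val_one, Matrix.head_cons] at hS ⊢
    linear_combination f₁ * mul_inv_cancel₀ hS
  have ha2 : dotp2 ξ₂ γ₀ = f₂ - V := by
    simp only [γ₀, V, Dsum, dotp2, R2, D2, Pi.smul_apply, Pi.add_apply, Pi.sub_apply,
      smul_eq_mul, Matrix.cons_val_zero, Matrix.cons_val_one, Matrix.head_cons] at hS ⊢
    linear_combination f₂ * mul_inv_cancel₀ hS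
  have ha3 : dotp2 ξ₃ γ₀ = f₃ - V := by
    simp only [γ₀, V, Dsum, dotp2, R2, D2, Pi.smul_apply, Pi.add_apply, Pi.sub_apply,
      smul_eq_mul, Matrix.cons_val_zero, Matrix.cons_val_one, Matrix.head_cons] at hS ⊢
    linear_combination f₃ * mul_inv_cancel₀ hS
  have hFdef : ∀ γ, F γ = max (max (f₁ - dotp2 ξ₁ γ) (f₂ - dotp2 ξ₂ γ)) (f₃ - dotp2 ξ₃ γ) :=
    fun γ => rfl
  clear_value Dsum V γ₀ F
  have hFγ₀ : F γ₀ = V := by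
    simp only [hFdef, ha1, ha2, ha3]
    have e : ∀ x : ℝ, x - (x - V) = V := fun x => by ring
    rw [e, e, e, max_self, max_self]
  have hlow : ∀ γ, V ≤ F γ := by
    intro γ
    rw [hFdef]
    have ht1 : f₁ - dotp2 ξ₁ γ ≤ max (max (f₁ - dotp2 ξ₁ γ) (f₂ - dotp2 ξ₂ γ)) (f₃ - dotp2 ξ₃ γ) :=
      le_trans (le_max_left _ _) (le_max_left _ _)
    have ht2 : f₂ - dotp2 ξ₂ γ ≤ max (max (f₁ - dotp2 ξ₁ γ) (f₂ - dotp2 ξ₂ γ)) (f₃ - dotp2 ξ₃ γ) :=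
      le_trans (le_max_right _ _) (le_max_left _ _)
    have ht3 : f₃ - dotp2 ξ₃ γ ≤ max (max (f₁ - dotp2 ξ₁ γ) (f₂ - dotp2 ξ₂ γ)) (f₃ - dotp2 ξ₃ γ) :=
      le_max_right _ _
    have hid2 : (D2 ξ₂ ξ₃ + D2 ξ₃ ξ₁ + D2 ξ₁ ξ₂) *
        (D2 ξ₂ ξ₃ * (f₁ - dotp2 ξ₁ γ) + D2 ξ₃ ξ₁ * (f₂ - dotp2 ξ₂ γ) +
          D2 ξ₁ ξ₂ * (f₃ - dotp2 ξ₃ γ)) =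
        (D2 ξ₂ ξ₃ + D2 ξ₃ ξ₁ + D2 ξ₁ ξ₂) * ((D2 ξ₂ ξ₃ + D2 ξ₃ ξ₁ + D2 ξ₁ ξ₂) * V) := by
      rw [hid γ]
    nlinarith [mul_nonneg hp1.le (sub_nonneg.mpr ht1), mul_nonneg hp2.le (sub_nonneg.mpr ht2),
      mul_nonneg hp3.le (sub_nonneg.mpr ht3), hid2, mul_self_pos.mpr hS]
  refine ⟨⟨⟨γ₀, hFγ₀⟩, ?_⟩, hFγ₀, ?_⟩
  · rintro y ⟨γ, rfl⟩
    exact hlow γ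
  · intro γ hγ
    rw [hFdef] at hγ
    have ht1 : f₁ - dotp2 ξ₁ γ ≤ V := by
      rw [← hγ]; exact le_trans (le_max_left _ _) (le_max_left _ _)
    have ht2 : f₂ - dotp2 ξ₂ γ ≤ V := by
      rw [← hγ]; exact le_trans (le_max_right _ _) (le_max_left _ _)
    have ht3 : f₃ - dotp2 ξ₃ γ ≤ V := by
      rw [← hγ]; exact le_max_right _ _
    have hid2 : (D2 ξ₂ ξ₃ + D2 ξ₃ ξ₁ + D2 ξ₁ ξ₂) *
        (D2 ξ₂ ξ₃ * (f₁ - dotp2 ξ₁ γ) + D2 ξ₃ ξ₁ * (f₂ - dotp2 ξ₂ γ) +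
          D2 ξ₁ ξ₂ * (f₃ - dotp2 ξ₃ γ)) =
        (D2 ξ₂ ξ₃ + D2 ξ₃ ξ₁ + D2 ξ₁ ξ₂) * ((D2 ξ₂ ξ₃ + D2 ξ₃ ξ₁ + D2 ξ₁ ξ₂) * V) := by
      rw [hid γ]
    have e1 : f₁ - dotp2 ξ₁ γ = V := le_antisymm ht1 (by
      nlinarith [mul_nonneg hp2.le (sub_nonneg.mpr ht2), mul_nonneg hp3.le (sub_nonneg.mpr ht3),
        hid2, hp1])
    have e2 : f₂ - dotp2 ξ₂ γ = V := le_antisymm ht2 (by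
      nlinarith [mul_nonneg hp1.le (sub_nonneg.mpr ht1), mul_nonneg hp3.le (sub_nonneg.mpr ht3),
        hid2, hp2])
    have g1 : ξ₁ 0 * γ 0 + ξ₁ 1 * γ 1 = ξ₁ 0 * γ₀ 0 + ξ₁ 1 * γ₀ 1 := by
      have : dotp2 ξ₁ γ = dotp2 ξ₁ γ₀ := by rw [ha1]; linarith [e1]
      simpa only [dotp2] using this
    have g2 : ξ₂ 0 * γ 0 + ξ₂ 1 * γ 1 = ξ₂ 0 * γ₀ 0 + ξ₂ 1 * γ₀ 1 := by
      have : dotp2 ξ₂ γ = dotp2 ξ₂ γ₀ := by rw [ha2]; linarith [e2]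
      simpa only [dotp2] using this
    have hd3ne : D2 ξ₁ ξ₂ ≠ 0 := by
      intro h; rw [h, zero_mul] at hp3; exact lt_irrefl 0 hp3
    have k0 : D2 ξ₁ ξ₂ * (γ 0 - γ₀ 0) = 0 := by
      simp only [D2]; linear_combination ξ₂ 1 * g1 - ξ₁ 1 * g2
    have k1 : D2 ξ₁ ξ₂ * (γ 1 - γ₀ 1) = 0 := by
      simp only [D2]; linear_combination ξ₁ 0 * g2 - ξ₂ 0 * g1
    funext i
    fin_cases i
    · show γ 0 = γ₀ 0
      have := (mul_eq_zero.mp k0).resolve_left hd3ne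
      linarith [this]
    · show γ 1 = γ₀ 1
      have := (mul_eq_zero.mp k1).resolve_left hd3ne
      linarith [this]
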